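/- Let k, m be positive integers with gcd(k, m) = 1, let q = 2^k, and let α ∈ F_{2^m} be such that x^{q+1} + x + α has no root in F_{2^m}. For u ∈ F_{2^m}, set f_u = u^{q+1} + u + α and g_u = u^{q²+1} + α·u^{q²} + (1 + α^q)·u + α. Then for every u ∈ F_{2^m}, the polynomial f_u·y^{q+1} + g_u·y + α·f_u^q has no root y in F_{2^m}. -/
import Mathlib


/-- With f_u = u^{q+1} + u + α and g_u = u^{q²+1} + α·u^{q²} + (1+α^q)·u + α,
if x^{q+1} + x + α has no root in F_{2^m}, then for every u the polynomial
f_u·y^{q+1} + g_u·y + α·f_u^q has no root y in F_{2^m}. -/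
theorem stmt_6 (k m : ℕ) (hk : 0 < k) (hm : 0 < m) (hgcd : Nat.gcd k m = 1)
    (K : Type*) [Field K] [Fintype K] [CharP K 2] (hcard : Fintype.card K = 2 ^ m)
    (q : ℕ) (hq : q = 2 ^ k) (α : K)
    (hα : ∀ x : K, x ^ (q + 1) + x + α ≠ 0)
    (f g : K → K)
    (hf : ∀ u : K, f u = u ^ (q + 1) + u + α)
    (hg : ∀ u : K, g u = u ^ (q ^ 2 + 1) + α * u ^ (q ^ 2) + (1 + α ^ q) * u + α) :
    ∀ u y : K, f u * y ^ (q + 1) + g u * y + α * (f u) ^ q ≠ 0 := by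
  intro u y hroot
  have h2 : (2 : K) = 0 := by
    have := CharP.cast_eq_zero K 2
    exact_mod_cast this
  subst hq
  haveI : Fact (Nat.Prime 2) := ⟨Nat.prime_two⟩
  have hfr : ∀ a b : K, (a + b) ^ (2 ^ k) = a ^ (2 ^ k) + b ^ (2 ^ k) := fun a b =>
    add_pow_char_pow a b 2 k
  have key : (u * y + α) ^ (2 ^ k + 1) + (u * y + α) * (y + u ^ (2 ^ k) + 1) ^ (2 ^ k)
      + α * (y + u ^ (2 ^ k) + 1) ^ (2 ^ k + 1)
      = f u * y ^ (2 ^ k + 1) + g u * y + α * (f u) ^ (2 ^ k) := by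
    rw [hf, hg]
    rw [show ((2 ^ k : ℕ) ^ 2) = 2 ^ k * 2 ^ k from sq (2 ^ k)]
    simp only [pow_succ, pow_mul, hfr, mul_pow, one_pow]
    linear_combination (α * u ^ (2 ^ k) * y ^ (2 ^ k) + α * y ^ (2 ^ k)
      + α * (u ^ (2 ^ k)) ^ (2 ^ k) + α) * h2
  have hzero : (u * y + α) ^ (2 ^ k + 1) + (u * y + α) * (y + u ^ (2 ^ k) + 1) ^ (2 ^ k)
      + α * (y + u ^ (2 ^ k) + 1) ^ (2 ^ k + 1) = 0 := by rw [key]; exact hroot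
  by_cases hD : y + u ^ (2 ^ k) + 1 = 0
  · rw [hD, zero_pow (by positivity), zero_pow (by positivity), mul_zero, mul_zero, add_zero,
      add_zero] at hzero
    have hN : u * y + α = 0 := pow_eq_zero_iff (by positivity) |>.mp hzero
    have hy : y = u ^ (2 ^ k) + 1 := by linear_combination hD - (u ^ (2 ^ k) + 1) * h2
    rw [hy] at hN
    exact hα u (by linear_combination hN)
  · obtain ⟨D, hDdef⟩ : ∃ D : K, D = y + u ^ (2 ^ k) + 1 := ⟨_, rfl⟩
    rw [← hDdef] at hzero hD
    obtain ⟨x, hxdef⟩ : ∃ x : K, x = (u * y + α) / D := ⟨_, rfl⟩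
    have hxD : x * D = u * y + α := by rw [hxdef]; exact div_mul_cancel₀ _ hD
    have hmain : (x ^ (2 ^ k + 1) + x + α) * D ^ (2 ^ k + 1) = 0 := by
      calc (x ^ (2 ^ k + 1) + x + α) * D ^ (2 ^ k + 1)
          = (x * D) ^ (2 ^ k) * (x * D) + (x * D) * D ^ (2 ^ k)
            + α * (D ^ (2 ^ k) * D) := by ring
        _ = (u * y + α) ^ (2 ^ k) * (u * y + α) + (u * y + α) * D ^ (2 ^ k)
            + α * (D ^ (2 ^ k) * D) := by rw [hxD]
        _ = 0 := by linear_combination hzero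
    rcases mul_eq_zero.mp hmain with h | h
    · exact hα x h
    · exact pow_ne_zero _ hD h
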